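/- Let x ∈ (0,∞)^d be a positive histogram with cumulative sum w_x = Σ_{i=1}^d x^i and normalization x̃ = x/w_x, and let h̃_1, …, h̃_n be frequency histograms with weights π_j > 0 summing to 1. Then Σ_{j=1}^n π_j J(x̃, h̃_j) = Σ_{j=1}^n π_j J(x, h̃_j) + ((1 − w_x)/w_x)·Σ_{j=1}^n π_j KL(x : h̃_j), where J(p,q) = Σ_{i=1}^d (p^i − q^i)·log(p^i/q^i) and KL(p:q) = Σ_{i=1}^d p^i·log(p^i/q^i). -/

import Mathlib

open scoped BigOperators

/-- Jeffreys divergence between positive histograms with `d` bins. -/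
noncomputable def Jeffreys {d : ℕ} (p q : Fin d → ℝ) : ℝ :=
  ∑ i, (p i - q i) * Real.log (p i / q i)

/-- Kullback-Leibler term between positive histograms with `d` bins. -/
noncomputable def KL {d : ℕ} (p q : Fin d → ℝ) : ℝ :=
  ∑ i, p i * Real.log (p i / q i)

lemma key {d : ℕ} (x q : Fin d → ℝ) (hx : ∀ i, 0 < x i) (hq : ∀ i, 0 < q i)
    (hq1 : ∑ i, q i = 1) (hw : 0 < ∑ i, x i) :
    Jeffreys (fun i => x i / ∑ k, x k) q =
      Jeffreys x q + ((1 - ∑ i, x i) / ∑ i, x i) * KL x q := by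
  set w := ∑ i, x i with hwdef
  have hwne : w ≠ 0 := ne_of_gt hw
  have hlog : ∀ i, Real.log ((x i / w) / q i) = Real.log (x i / q i) - Real.log w := by
    intro i
    rw [div_right_comm, Real.log_div (div_ne_zero (ne_of_gt (hx i)) (ne_of_gt (hq i))) hwne]
  have expand : ∀ i, (x i / w - q i) * Real.log ((x i / w) / q i) =
      (1 / w) * (x i * Real.log (x i / q i)) - q i * Real.log (x i / q i)
        - (Real.log w / w) * x i + Real.log w * q i := by
    intro i
    rw [hlog i]
    ring
  have hJ : Jeffreys x q = KL x q - ∑ i, q i * Real.log (x i / q i) := by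
    simp [Jeffreys, KL, sub_mul, Finset.sum_sub_distrib]
  calc Jeffreys (fun i => x i / ∑ k, x k) q
      = ∑ i, ((1 / w) * (x i * Real.log (x i / q i)) - q i * Real.log (x i / q i)
          - (Real.log w / w) * x i + Real.log w * q i) := by
        simp only [Jeffreys]
        exact Finset.sum_congr rfl (fun i _ => expand i)
    _ = (1 / w) * KL x q - ∑ i, q i * Real.log (x i / q i)
          - (Real.log w / w) * w + Real.log w * 1 := by
        simp [Finset.sum_sub_distrib, Finset.sum_add_distrib, ← Finset.mul_sum, KL, hq1]
        exact Or.inl hwdef.symm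
    _ = Jeffreys x q + ((1 - w) / w) * KL x q := by
        rw [hJ]
        field_simp
        ring

/-- `J(x̃, H̃) = J(x, H̃) + ((1 − w_x)/w_x)·KL(x : H̃)` where `x̃ = x / w_x`. -/
theorem jeffreys_normalized_vs_positive
    (d n : ℕ) (x : Fin d → ℝ) (hx : ∀ i, 0 < x i)
    (h : Fin n → Fin d → ℝ) (hpos : ∀ j i, 0 < h j i) (hfreq : ∀ j, ∑ i, h j i = 1)
    (π : Fin n → ℝ) (hπ : ∀ j, 0 < π j) (hπ1 : ∑ j, π j = 1) :
    ∑ j, π j * Jeffreys (fun i => x i / ∑ k, x k) (h j) =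
      (∑ j, π j * Jeffreys x (h j)) +
        ((1 - ∑ i, x i) / ∑ i, x i) * ∑ j, π j * KL x (h j) := by
  rcases Nat.eq_zero_or_pos d with hd | hd
  · subst hd; simp [Jeffreys, KL]
  · haveI : Nonempty (Fin d) := ⟨⟨0, hd⟩⟩
    have hw : 0 < ∑ i, x i := Finset.sum_pos (fun i _ => hx i) Finset.univ_nonempty
    calc ∑ j, π j * Jeffreys (fun i => x i / ∑ k, x k) (h j)
        = ∑ j, (π j * Jeffreys x (h j)
            + ((1 - ∑ i, x i) / ∑ i, x i) * (π j * KL x (h j))) := by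
          refine Finset.sum_congr rfl fun j _ => ?_
          rw [key x (h j) hx (hpos j) (hfreq j) hw]; ring
      _ = _ := by rw [Finset.sum_add_distrib, ← Finset.mul_sum]
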